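/- For positive definite Hermitian matrices A and B, with U := B^{-1/2} A^{-1/2} (A^{1/2} B A^{1/2})^{1/2}, one has tr(A) + tr(B) - 2·tr((A^{1/2} B A^{1/2})^{1/2}) = ‖A^{1/2} - B^{1/2} U‖², where ‖M‖² = tr(M* M) is the squared Frobenius norm. -/

import Mathlib

open Matrix
open scoped ComplexOrder

namespace Matrix.PosSemidef

/-- The positive semidefinite square root, as defined in Mathlib of December 2024
(removed from Mathlib since). -/
noncomputable def sqrt {n : Type*} [Fintype n] [DecidableEq n] {𝕜 : Type*} [RCLike 𝕜]
    {A : Matrix n n 𝕜} (hA : PosSemidef A) : Matrix n n 𝕜 :=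
  hA.1.eigenvectorUnitary.1 * diagonal ((↑) ∘ (√·) ∘ hA.1.eigenvalues) *
  (star hA.1.eigenvectorUnitary : Matrix n n 𝕜)

end Matrix.PosSemidef

lemma Matrix.PosSemidef.posSemidef_sqrt {n : Type*} [Fintype n] [DecidableEq n] {𝕜 : Type*}
    [RCLike 𝕜] {A : Matrix n n 𝕜} (hA : PosSemidef A) : PosSemidef hA.sqrt := by
  unfold Matrix.PosSemidef.sqrt
  have hD : PosSemidef (diagonal ((↑) ∘ (√·) ∘ hA.1.eigenvalues) : Matrix n n 𝕜) := by
    rw [posSemidef_diagonal_iff]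
    intro i
    simp only [Function.comp_apply, RCLike.ofReal_nonneg]
    exact Real.sqrt_nonneg _
  have := hD.mul_mul_conjTranspose_same (hA.1.eigenvectorUnitary : Matrix n n 𝕜)
  rwa [star_eq_conjTranspose]

lemma Matrix.PosSemidef.sqrt_mul_self {n : Type*} [Fintype n] [DecidableEq n] {𝕜 : Type*}
    [RCLike 𝕜] {A : Matrix n n 𝕜} (hA : PosSemidef A) : hA.sqrt * hA.sqrt = A := by
  have hU : (star hA.1.eigenvectorUnitary : Matrix n n 𝕜) * hA.1.eigenvectorUnitary = 1 :=
    Unitary.coe_star_mul_self _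
  have hD : diagonal ((↑) ∘ (√·) ∘ hA.1.eigenvalues) *
      diagonal ((↑) ∘ (√·) ∘ hA.1.eigenvalues) =
      (diagonal (RCLike.ofReal ∘ hA.1.eigenvalues) : Matrix n n 𝕜) := by
    rw [diagonal_mul_diagonal]
    congr 1
    funext i
    simp only [Function.comp_apply, ← RCLike.ofReal_mul,
      Real.mul_self_sqrt (hA.eigenvalues_nonneg i)]
  conv_rhs => rw [hA.1.spectral_theorem, Unitary.conjStarAlgAut_apply]
  unfold Matrix.PosSemidef.sqrt
  rw [← hD]
  simp only [mul_assoc]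
  rw [← mul_assoc (star hA.1.eigenvectorUnitary : Matrix n n 𝕜) _, hU, one_mul]

theorem hellinger_as_factor_distance (n : ℕ)
    (A B : Matrix (Fin n) (Fin n) ℂ) (hA : A.PosDef) (hB : B.PosDef)
    (hS : (hA.posSemidef.sqrt * B * hA.posSemidef.sqrt).PosSemidef) :
    A.trace.re + B.trace.re - 2 * hS.sqrt.trace.re =
      (((hA.posSemidef.sqrt -
          hB.posSemidef.sqrt * (hB.posSemidef.sqrt⁻¹ * hA.posSemidef.sqrt⁻¹ * hS.sqrt))ᴴ *
        (hA.posSemidef.sqrt -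
          hB.posSemidef.sqrt * (hB.posSemidef.sqrt⁻¹ * hA.posSemidef.sqrt⁻¹ * hS.sqrt))).trace).re := by
  set a := hA.posSemidef.sqrt with ha_def
  set b := hB.posSemidef.sqrt with hb_def
  set S := hS.sqrt with hS_def
  have haH : aᴴ = a := hA.posSemidef.posSemidef_sqrt.1
  have hSH : Sᴴ = S := hS.posSemidef_sqrt.1
  have haa : a * a = A := hA.posSemidef.sqrt_mul_self
  have hSS : S * S = a * B * a := hS.sqrt_mul_self
  have hadet : IsUnit a.det := by
    have h1 : a.det * a.det = A.det := by rw [← det_mul, haa]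
    have h2 : A.det ≠ 0 := hA.det_pos.ne'
    exact isUnit_iff_ne_zero.mpr fun h => h2 (by rw [← h1, h, mul_zero])
  have hbdet : IsUnit b.det := by
    have h1 : b.det * b.det = B.det := by
      rw [← det_mul, hB.posSemidef.sqrt_mul_self]
    exact isUnit_iff_ne_zero.mpr fun h => hB.det_pos.ne' (by rw [← h1, h, mul_zero])
  have haiH : a⁻¹ᴴ = a⁻¹ := by rw [conjTranspose_nonsing_inv, haH]
  have hb : b * (b⁻¹ * a⁻¹ * S) = a⁻¹ * S := by
    rw [mul_assoc b⁻¹, mul_nonsing_inv_cancel_left _ _ hbdet]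
  rw [hb]
  have hexp : (a - a⁻¹ * S)ᴴ * (a - a⁻¹ * S) =
      a * a - a * (a⁻¹ * S) - S * a⁻¹ * a + S * a⁻¹ * (a⁻¹ * S) := by
    rw [conjTranspose_sub, conjTranspose_mul, haH, haiH, hSH]
    noncomm_ring
  have h2 : a * (a⁻¹ * S) = S := mul_nonsing_inv_cancel_left _ _ hadet
  have h3 : S * a⁻¹ * a = S := nonsing_inv_mul_cancel_right _ _ hadet
  have h4 : ((S * a⁻¹ * (a⁻¹ * S)).trace) = B.trace := by
    rw [trace_mul_comm, ← mul_assoc, mul_assoc a⁻¹, hSS]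
    have : a⁻¹ * (a * B * a) * a⁻¹ = B := by
      rw [← mul_assoc, ← mul_assoc, nonsing_inv_mul _ hadet, one_mul, mul_assoc,
        mul_nonsing_inv _ hadet, mul_one]
    rw [this]
  rw [hexp, trace_add, trace_sub, trace_sub, haa, h2, h3, h4]
  simp only [Complex.add_re, Complex.sub_re]
  ring
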